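/- Let m ≥ 1 and let λ : Fin m → ℝ satisfy λ_i > 0 for all i. For all delays τ₁, τ₂ with 0 ≤ τ₁ < τ₂ and τ₂·λ_i < π/2 for every i, it holds that Σ_{i} cos(τ₁λ_i)/(2λ_i(1 − sin(τ₁λ_i))) < Σ_{i} cos(τ₂λ_i)/(2λ_i(1 − sin(τ₂λ_i))). In other words, the performance measure ρ_ss(L;τ) = Σ_i f_τ(λ_i) is strictly increasing in the time-delay τ on [0, π/(2·max_i λ_i)). -/
import Mathlib


open Real

lemma key_mono (a b : ℝ) (ha : 0 ≤ a) (hab : a < b) (hb : b < Real.pi / 2) :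
    Real.cos a / (1 - Real.sin a) < Real.cos b / (1 - Real.sin b) := by
  have hpi : (0:ℝ) < Real.pi / 2 := by positivity
  have hca : 0 < Real.cos a := by
    apply Real.cos_pos_of_mem_Ioo
    constructor <;> [linarith; linarith]
  have hcb : 0 < Real.cos b := by
    apply Real.cos_pos_of_mem_Ioo
    constructor <;> [linarith; linarith]
  have hsab : Real.sin a < Real.sin b := by
    apply Real.sin_lt_sin_of_lt_of_le_pi_div_two (by linarith) (le_of_lt hb) hab
  have hsb1 : Real.sin b < 1 := by
    calc Real.sin b < Real.sin (Real.pi / 2) :=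
          Real.sin_lt_sin_of_lt_of_le_pi_div_two (by linarith) le_rfl hb
      _ = 1 := Real.sin_pi_div_two
  have hsa1 : Real.sin a < 1 := lt_trans hsab hsb1
  have hcab : Real.cos b < Real.cos a := by
    apply Real.cos_lt_cos_of_nonneg_of_le_pi ha (by linarith) hab
  rw [div_lt_div_iff₀ (by linarith) (by linarith)]
  nlinarith [Real.sin_sq_add_cos_sq a, Real.sin_sq_add_cos_sq b,
    mul_pos hca hcb, sq_nonneg (Real.cos a - Real.cos b),
    sq_nonneg (Real.sin a - Real.sin b)]

/-- The performance measure `ρ_ss(L;τ) = Σᵢ f_τ(λᵢ)`, with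
`f_τ(λ) = cos(τλ)/(2λ(1 − sin(τλ)))`, is strictly increasing in the delay:
if `0 ≤ τ₁ < τ₂` and `τ₂·λᵢ < π/2` for all `i`, the sum at `τ₁` is strictly
smaller than the sum at `τ₂`. -/
theorem performance_strictly_increasing_in_delay (m : ℕ) (hm : 1 ≤ m)
    (lam : Fin m → ℝ) (hlam : ∀ i, 0 < lam i)
    (τ₁ τ₂ : ℝ) (hτ₁ : 0 ≤ τ₁) (hτ : τ₁ < τ₂)
    (hστ : ∀ i, τ₂ * lam i < Real.pi / 2) :
    ∑ i, Real.cos (τ₁ * lam i) / (2 * lam i * (1 - Real.sin (τ₁ * lam i))) <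
      ∑ i, Real.cos (τ₂ * lam i) / (2 * lam i * (1 - Real.sin (τ₂ * lam i))) := by
  have : NeZero m := ⟨by omega⟩
  apply Finset.sum_lt_sum_of_nonempty Finset.univ_nonempty
  intro i _
  have hl := hlam i
  have ha : 0 ≤ τ₁ * lam i := mul_nonneg hτ₁ hl.le
  have hab : τ₁ * lam i < τ₂ * lam i := by
    exact mul_lt_mul_of_pos_right hτ hl
  have hb := hστ i
  have hk := key_mono _ _ ha hab hb
  have e1 : ∀ θ : ℝ,
      Real.cos θ / (2 * lam i * (1 - Real.sin θ)) =
        (Real.cos θ / (1 - Real.sin θ)) / (2 * lam i) := by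
    intro θ; rw [div_div]; ring_nf
  rw [e1, e1]
  gcongr
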